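/- Let G be a connected graph, k a nonnegative integer, and S a minimal trivially perfect completion of G with |S| ≤ k; let H = G+S, and let (B, D) be a block of the universal clique decomposition of H that is neither a leaf block nor the root block, with tail Q. Then: (i) Q = Ω₁ ∩ Ω₂ for some vital potential maximal cliques Ω₁, Ω₂ of (G,k); (ii) B = Q \ Ω₃ for some vital potential maximal clique Ω₃ of (G,k); and (iii) D is the vertex set of the connected component of G − (Q \ B) that contains B. -/

import Mathlib

open SimpleGraph

universe u

/-- A graph is *trivially perfect* if it has no induced subgraph isomorphic to `C₄` or `P₄`. -/
def TriviallyPerfect {V : Type u} (G : SimpleGraph V) : Prop :=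
  IsEmpty (SimpleGraph.cycleGraph 4 ↪g G) ∧ IsEmpty (SimpleGraph.pathGraph 4 ↪g G)

/-- A *universal clique decomposition* of a graph `G`: a finite rooted tree (modelled as a
finite partial order in which the set of elements above any element is a chain and which has
a top element, the root) together with a partition of the vertices into nonempty bags such that
adjacent vertices lie in comparable nodes, and each bag is exactly the set of universal
vertices of the subgraph induced by the union of the bags in the subtree below it. -/
structure UCD {V : Type u} (G : SimpleGraph V) : Type (u + 1) where
  ι : Type u
  [po : PartialOrder ι]
  [ot : OrderTop ι]
  [fin : Fintype ι]
  bag : ι → Set V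
  bag_nonempty : ∀ t, (bag t).Nonempty
  bag_disjoint : ∀ s t, s ≠ t → Disjoint (bag s) (bag t)
  bag_cover : ∀ v, ∃ t, v ∈ bag t
  up_chain : ∀ a b c : ι, a ≤ b → a ≤ c → b ≤ c ∨ c ≤ b
  adj_comparable : ∀ v w s t, G.Adj v w → v ∈ bag t → w ∈ bag s → s ≤ t ∨ t ≤ s
  bag_eq_universal : ∀ t, bag t =
    {v | (∃ s ≤ t, v ∈ bag s) ∧ ∀ w, (∃ s ≤ t, w ∈ bag s) → w ≠ v → G.Adj v w}

attribute [instance] UCD.po UCD.ot UCD.fin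

namespace UCD

variable {V : Type u} {G : SimpleGraph V} (U : UCD G)

/-- `D_t`: the union of the bags in the subtree rooted at `t`. -/
def subtreeSet (t : U.ι) : Set V := {v | ∃ s, s ≤ t ∧ v ∈ U.bag s}

/-- `Q_t`: the union of the bags on the path from `t` to the root. -/
def tailSet (t : U.ι) : Set V := {v | ∃ s, t ≤ s ∧ v ∈ U.bag s}

/-- `t` is a leaf of the decomposition tree. -/
def IsLeaf (t : U.ι) : Prop := ∀ s : U.ι, s ≤ t → s = t

end UCD

/-- `G + S`: the graph obtained from `G` by adding the pairs in `S` as edges. -/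
def completes {V : Type u} (G : SimpleGraph V) (S : Set (Sym2 V)) : SimpleGraph V :=
  G ⊔ SimpleGraph.fromEdgeSet S

/-- `S` is a set of non-edges of `G` (unordered pairs of distinct vertices, none an edge). -/
def IsCompletionSet {V : Type u} (G : SimpleGraph V) (S : Set (Sym2 V)) : Prop :=
  (∀ e ∈ S, ¬ e.IsDiag) ∧ Disjoint S G.edgeSet

/-- `S` is a minimal trivially perfect completion of `G`. -/
def IsMinTPCompletion {V : Type u} (G : SimpleGraph V) (S : Set (Sym2 V)) : Prop :=
  IsCompletionSet G S ∧ TriviallyPerfect (completes G S) ∧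
    ∀ S' ⊂ S, ¬ TriviallyPerfect (completes G S')

/-- A vital potential maximal clique of `(G, k)`. -/
def VitalPMC {V : Type u} (G : SimpleGraph V) (k : ℕ) (Ω : Set V) : Prop :=
  ∃ S, IsMinTPCompletion G S ∧ S.ncard ≤ k ∧ Maximal (completes G S).IsClique Ω

namespace UCD

variable {V : Type u} {H : SimpleGraph V} (U : UCD H)

lemma eq_of_mem_bag {s s' : U.ι} {v : V} (hs : v ∈ U.bag s) (hs' : v ∈ U.bag s') : s = s' := by
  by_contra h
  exact (U.bag_disjoint s s' h).le_bot ⟨hs, hs'⟩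

lemma adj_of_le {s s' : U.ι} {v w : V} (h : s ≤ s') (hv : v ∈ U.bag s) (hw : w ∈ U.bag s')
    (hne : v ≠ w) : H.Adj v w := by
  have hw2 := hw
  rw [U.bag_eq_universal s'] at hw2
  exact (hw2.2 v ⟨s, h, hv⟩ hne).symm

lemma bag_subset_subtree (t : U.ι) : U.bag t ⊆ U.subtreeSet t := fun v hv => ⟨t, le_rfl, hv⟩

lemma bag_subset_tail (t : U.ι) : U.bag t ⊆ U.tailSet t := fun v hv => ⟨t, le_rfl, hv⟩

lemma tail_isClique (t : U.ι) : H.IsClique (U.tailSet t) := by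
  rintro v ⟨s1, h1, hv⟩ w ⟨s2, h2, hw⟩ hne
  rcases U.up_chain t s1 s2 h1 h2 with h | h
  · exact U.adj_of_le h hv hw hne
  · exact (U.adj_of_le h hw hv hne.symm).symm

lemma mem_bag_of_mem_subtree_tail {t : U.ι} {v : V} (h1 : v ∈ U.subtreeSet t)
    (h2 : v ∈ U.tailSet t) : v ∈ U.bag t := by
  obtain ⟨s, hs, hv⟩ := h1
  obtain ⟨s', hs', hv'⟩ := h2
  have he : s = s' := U.eq_of_mem_bag hv hv'
  have : s = t := le_antisymm hs (he ▸ hs')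
  exact this ▸ hv

lemma adj_mem_subtree {t : U.ι} {v w : V} (hv : v ∈ U.subtreeSet t) (h : H.Adj v w) :
    w ∈ U.subtreeSet t ∨ (w ∈ U.tailSet t ∧ w ∉ U.bag t) := by
  obtain ⟨s, hs, hvb⟩ := hv
  obtain ⟨s', hwb⟩ := U.bag_cover w
  rcases U.adj_comparable v w s' s h hvb hwb with h1 | h1
  · exact Or.inl ⟨s', h1.trans hs, hwb⟩
  · rcases U.up_chain s s' t h1 hs with h2 | h2
    · exact Or.inl ⟨s', h2, hwb⟩
    · by_cases he : s' = t
      · exact Or.inl ⟨s', he.le, hwb⟩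
      · exact Or.inr ⟨⟨s', h2, hwb⟩, fun hbt => he (U.eq_of_mem_bag hwb hbt)⟩

lemma tail_sdiff_universal {t : U.ι} {w v : V} (hw : w ∈ U.tailSet t) (hwb : w ∉ U.bag t)
    (hv : v ∈ U.subtreeSet t) : H.Adj w v := by
  obtain ⟨s', hs', hwb'⟩ := hw
  obtain ⟨s, hs, hvb⟩ := hv
  have hne : v ≠ w := by
    rintro rfl
    have he : s = s' := U.eq_of_mem_bag hvb hwb'
    have : s = t := le_antisymm hs (he ▸ hs')
    exact hwb (this ▸ hvb)
  exact (U.adj_of_le (hs.trans hs') hvb hwb' hne).symm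

lemma exists_leaf_le (s : U.ι) : ∃ ℓ, ℓ ≤ s ∧ U.IsLeaf ℓ := by
  obtain ⟨ℓ, hls, hmin⟩ := exists_minimal_le_of_wellFoundedLT (· ≤ s) s le_rfl
  exact ⟨ℓ, hmin.1, fun x hx => le_antisymm hx (hmin.2 (hx.trans hmin.1) hx)⟩

lemma no_top_child {m t : U.ι} (hm : m < t) (hall : ∀ s, s < t → s ≤ m) : False := by
  obtain ⟨v, hv⟩ := U.bag_nonempty m
  have hvt : v ∈ U.bag t := by
    rw [U.bag_eq_universal t]
    refine ⟨⟨m, hm.le, hv⟩, ?_⟩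
    rintro w ⟨s, hs, hws⟩ hne
    rcases eq_or_lt_of_le hs with rfl | hlt
    · have hw2 := hws
      rw [U.bag_eq_universal s] at hw2
      exact (hw2.2 v ⟨m, hm.le, hv⟩ (fun h => hne h.symm)).symm
    · have hv2 := hv
      rw [U.bag_eq_universal m] at hv2
      exact hv2.2 w ⟨s, hall s hlt, hws⟩ hne
  exact absurd (U.eq_of_mem_bag hv hvt) hm.ne

lemma exists_max_child {s t : U.ι} (hst : s < t) :
    ∃ m, s ≤ m ∧ m < t ∧ ∀ x, m ≤ x → x < t → x = m := by
  obtain ⟨m, hsm, hmax⟩ := Finite.exists_le_maximal (p := (· < t)) hst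
  exact ⟨m, hsm, hmax.1, fun x hmx hxt => le_antisymm (hmax.2 hxt hmx) hmx⟩

lemma two_children {t : U.ι} (hleaf : ¬ U.IsLeaf t) :
    ∃ m1 m2, m1 < t ∧ m2 < t ∧ ¬ m1 ≤ m2 ∧ ¬ m2 ≤ m1 ∧
      (∀ x, m1 ≤ x → x < t → x = m1) ∧ (∀ x, m2 ≤ x → x < t → x = m2) := by
  have h0 : ∃ s, s ≤ t ∧ s ≠ t := by
    by_contra h
    push_neg at h
    exact hleaf fun s hs => h s hs
  obtain ⟨s0, hs0, hs0ne⟩ := h0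
  obtain ⟨m1, _, hm1t, hmax1⟩ := U.exists_max_child (lt_of_le_of_ne hs0 hs0ne)
  have h1 : ∃ s, s < t ∧ ¬ s ≤ m1 := by
    by_contra h
    push_neg at h
    exact U.no_top_child hm1t h
  obtain ⟨s1, hs1t, hs1⟩ := h1
  obtain ⟨m2, hs1m2, hm2t, hmax2⟩ := U.exists_max_child hs1t
  refine ⟨m1, m2, hm1t, hm2t, ?_, ?_, hmax1, hmax2⟩
  · intro h
    have := hmax1 m2 h hm2t
    exact hs1 (this ▸ hs1m2)
  · exact fun h => hs1 (hs1m2.trans h)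

lemma exists_parent {t : U.ι} (h : t ≠ ⊤) : ∃ p, t < p ∧ ∀ s, t < s → p ≤ s := by
  obtain ⟨p, _, hmin⟩ := exists_minimal_le_of_wellFoundedLT (t < ·) ⊤ (lt_top_iff_ne_top.mpr h)
  refine ⟨p, hmin.1, fun s hs => ?_⟩
  rcases U.up_chain t p s hmin.1.le hs.le with h1 | h1
  · exact h1
  · exact hmin.2 hs h1

lemma leaf_tail_maximal {ℓ : U.ι} (hl : U.IsLeaf ℓ) : Maximal H.IsClique (U.tailSet ℓ) := by
  constructor
  · exact U.tail_isClique ℓ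
  · intro K hK hsub x hx
    by_contra hxt
    obtain ⟨u, hu⟩ := U.bag_nonempty ℓ
    have huK : u ∈ K := hsub ⟨ℓ, le_rfl, hu⟩
    have hne : x ≠ u := fun h => hxt (h ▸ ⟨ℓ, le_rfl, hu⟩)
    obtain ⟨s, hs⟩ := U.bag_cover x
    rcases U.adj_comparable x u ℓ s (hK hx huK hne) hs hu with h1 | h1
    · exact hxt ⟨s, h1, hs⟩
    · exact hxt ⟨s, le_of_eq (hl s h1).symm, hs⟩

end UCD
section Cross

variable {V : Type u}

/-- Auxiliary bundle of hypotheses used to show that deleting all "cross" edges of a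
trivially perfect graph keeps it trivially perfect. -/
structure CrossSetup (H' : SimpleGraph V) (D R : Set V) (cross : V → V → Prop) : Prop where
  h1 : ∀ x y, cross x y → ¬ H'.Adj x y
  h2 : ∀ v ∈ D, ∀ w, H'.Adj v w → w ∈ D ∨ w ∈ R
  h3 : ∀ r ∈ R, ∀ v ∈ D, H'.Adj r v
  h4 : ∀ r ∈ R, ∀ r' ∈ R, r ≠ r' → H'.Adj r r'
  h5 : ∀ u v w, v ∈ D → cross u w → ¬ cross u v → cross v w
  h6 : ∀ x y, cross x y → cross y x
  h7 : ∀ x y, cross x y → x ∈ D ∧ y ∈ D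
  h8 : ∀ x, ¬ cross x x

variable {H' : SimpleGraph V} {D R : Set V} {cross : V → V → Prop}

lemma CrossSetup.C4core (hs : CrossSetup H' D R cross) {x1 x2 x3 x4 : V}
    (a12 : H'.Adj x1 x2) (a23 : H'.Adj x2 x3) (a34 : H'.Adj x3 x4) (a41 : H'.Adj x4 x1)
    (n24 : ¬ H'.Adj x2 x4) (hne : x2 ≠ x4) (hc : cross x1 x3) : False := by
  obtain ⟨hx1, _⟩ := hs.h7 _ _ hc
  have hx2R : x2 ∈ R := by
    rcases hs.h2 x1 hx1 x2 a12 with h | h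
    · exact absurd a23 (hs.h1 _ _ (hs.h5 x1 x2 x3 h hc (fun c => hs.h1 _ _ c a12)))
    · exact h
  have hx4R : x4 ∈ R := by
    rcases hs.h2 x1 hx1 x4 a41.symm with h | h
    · exact absurd a34.symm (hs.h1 _ _ (hs.h5 x1 x4 x3 h hc (fun c => hs.h1 _ _ c a41.symm)))
    · exact h
  exact n24 (hs.h4 _ hx2R _ hx4R hne)

lemma CrossSetup.P4core02 (hs : CrossSetup H' D R cross) {x0 x1 x2 x3 : V}
    (a01 : H'.Adj x0 x1) (a12 : H'.Adj x1 x2) (a23 : H'.Adj x2 x3)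
    (n03 : ¬ H'.Adj x0 x3) (n13 : ¬ H'.Adj x1 x3) (hc : cross x0 x2) : False := by
  obtain ⟨hx0, hx2⟩ := hs.h7 _ _ hc
  have hx1R : x1 ∈ R := by
    rcases hs.h2 x0 hx0 x1 a01 with h | h
    · exact absurd a12 (hs.h1 _ _ (hs.h5 x0 x1 x2 h hc (fun c => hs.h1 _ _ c a01)))
    · exact h
  have hx3D : x3 ∈ D := by
    rcases hs.h2 x2 hx2 x3 a23 with h | h
    · exact h
    · exact absurd (hs.h3 _ h _ hx0) (fun a => n03 a.symm)
  exact n13 (hs.h3 _ hx1R _ hx3D)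

lemma CrossSetup.P4core03 (hs : CrossSetup H' D R cross) {x0 x1 x2 x3 : V}
    (a01 : H'.Adj x0 x1) (a12 : H'.Adj x1 x2) (a23 : H'.Adj x2 x3)
    (n02 : ¬ H'.Adj x0 x2) (n13 : ¬ H'.Adj x1 x3) (hc : cross x0 x3) : False := by
  obtain ⟨hx0, hx3⟩ := hs.h7 _ _ hc
  have hx1D : x1 ∈ D := by
    rcases hs.h2 x0 hx0 x1 a01 with h | h
    · exact h
    · exact absurd (hs.h3 _ h _ hx3) n13
  have hx2D : x2 ∈ D := by
    rcases hs.h2 x3 hx3 x2 a23.symm with h | h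
    · exact h
    · exact absurd (hs.h3 _ h _ hx0) (fun a => n02 a.symm)
  have c13 : cross x1 x3 := hs.h5 x0 x1 x3 hx1D hc (fun c => hs.h1 _ _ c a01)
  have c21 : cross x2 x1 := hs.h5 x3 x2 x1 hx2D (hs.h6 _ _ c13) (fun c => hs.h1 _ _ c a23.symm)
  exact hs.h1 _ _ (hs.h6 _ _ c21) a12

lemma CrossSetup.C4core' (hs : CrossSetup H' D R cross) (f : SimpleGraph.cycleGraph 4 ↪g H')
    (i0 i1 i2 i3 : Fin 4)
    (h01 : (SimpleGraph.cycleGraph 4).Adj i0 i1) (h12 : (SimpleGraph.cycleGraph 4).Adj i1 i2)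
    (h23 : (SimpleGraph.cycleGraph 4).Adj i2 i3) (h30 : (SimpleGraph.cycleGraph 4).Adj i3 i0)
    (n13 : ¬ (SimpleGraph.cycleGraph 4).Adj i1 i3) (ne13 : i1 ≠ i3)
    (hc : cross (f i0) (f i2)) : False :=
  hs.C4core (f.map_rel_iff.mpr h01) (f.map_rel_iff.mpr h12) (f.map_rel_iff.mpr h23)
    (f.map_rel_iff.mpr h30) (fun h => n13 (f.map_rel_iff.mp h)) (fun h => ne13 (f.injective h)) hc


lemma pg_adj {u v : Fin 4} (h : u.val + 1 = v.val ∨ v.val + 1 = u.val) :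
    (SimpleGraph.pathGraph 4).Adj u v := SimpleGraph.pathGraph_adj.mpr h

lemma pg_nadj {u v : Fin 4} (h : ¬ (u.val + 1 = v.val ∨ v.val + 1 = u.val)) :
    ¬ (SimpleGraph.pathGraph 4).Adj u v := fun a => h (SimpleGraph.pathGraph_adj.mp a)

lemma CrossSetup.P4core02' (hs : CrossSetup H' D R cross) (f : SimpleGraph.pathGraph 4 ↪g H')
    (i0 i1 i2 i3 : Fin 4)
    (h01 : (SimpleGraph.pathGraph 4).Adj i0 i1) (h12 : (SimpleGraph.pathGraph 4).Adj i1 i2)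
    (h23 : (SimpleGraph.pathGraph 4).Adj i2 i3)
    (n03 : ¬ (SimpleGraph.pathGraph 4).Adj i0 i3) (n13 : ¬ (SimpleGraph.pathGraph 4).Adj i1 i3)
    (hc : cross (f i0) (f i2)) : False :=
  hs.P4core02 (f.map_rel_iff.mpr h01) (f.map_rel_iff.mpr h12) (f.map_rel_iff.mpr h23)
    (fun h => n03 (f.map_rel_iff.mp h)) (fun h => n13 (f.map_rel_iff.mp h)) hc

lemma CrossSetup.P4core03' (hs : CrossSetup H' D R cross) (f : SimpleGraph.pathGraph 4 ↪g H')
    (i0 i1 i2 i3 : Fin 4)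
    (h01 : (SimpleGraph.pathGraph 4).Adj i0 i1) (h12 : (SimpleGraph.pathGraph 4).Adj i1 i2)
    (h23 : (SimpleGraph.pathGraph 4).Adj i2 i3)
    (n02 : ¬ (SimpleGraph.pathGraph 4).Adj i0 i2) (n13 : ¬ (SimpleGraph.pathGraph 4).Adj i1 i3)
    (hc : cross (f i0) (f i3)) : False :=
  hs.P4core03 (f.map_rel_iff.mpr h01) (f.map_rel_iff.mpr h12) (f.map_rel_iff.mpr h23)
    (fun h => n02 (f.map_rel_iff.mp h)) (fun h => n13 (f.map_rel_iff.mp h)) hc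

lemma CrossSetup.noC4 (hs : CrossSetup H' D R cross) (f : SimpleGraph.cycleGraph 4 ↪g H')
    {i j : Fin 4} (hc : cross (f i) (f j)) : False := by
  fin_cases i <;> fin_cases j <;>
  first
    | exact hs.h8 _ hc
    | exact hs.h1 _ _ hc (f.map_rel_iff.mpr (by decide))
    | exact hs.C4core' f 0 1 2 3 (by decide) (by decide) (by decide) (by decide) (by decide)
        (by decide) hc
    | exact hs.C4core' f 1 2 3 0 (by decide) (by decide) (by decide) (by decide) (by decide)
        (by decide) hc
    | exact hs.C4core' f 2 3 0 1 (by decide) (by decide) (by decide) (by decide) (by decide)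
        (by decide) hc
    | exact hs.C4core' f 3 0 1 2 (by decide) (by decide) (by decide) (by decide) (by decide)
        (by decide) hc

lemma CrossSetup.noP4 (hs : CrossSetup H' D R cross) (f : SimpleGraph.pathGraph 4 ↪g H')
    {i j : Fin 4} (hc : cross (f i) (f j)) : False := by
  fin_cases i <;> fin_cases j <;>
  first
    | exact hs.h8 _ hc
    | exact hs.h1 _ _ hc (f.map_rel_iff.mpr (pg_adj (by decide)))
    | exact hs.P4core02' f 0 1 2 3 (pg_adj (by decide)) (pg_adj (by decide)) (pg_adj (by decide))
        (pg_nadj (by decide)) (pg_nadj (by decide)) hc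
    | exact hs.P4core02' f 0 1 2 3 (pg_adj (by decide)) (pg_adj (by decide)) (pg_adj (by decide))
        (pg_nadj (by decide)) (pg_nadj (by decide)) (hs.h6 _ _ hc)
    | exact hs.P4core02' f 3 2 1 0 (pg_adj (by decide)) (pg_adj (by decide)) (pg_adj (by decide))
        (pg_nadj (by decide)) (pg_nadj (by decide)) hc
    | exact hs.P4core02' f 3 2 1 0 (pg_adj (by decide)) (pg_adj (by decide)) (pg_adj (by decide))
        (pg_nadj (by decide)) (pg_nadj (by decide)) (hs.h6 _ _ hc)
    | exact hs.P4core03' f 0 1 2 3 (pg_adj (by decide)) (pg_adj (by decide)) (pg_adj (by decide))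
        (pg_nadj (by decide)) (pg_nadj (by decide)) hc
    | exact hs.P4core03' f 0 1 2 3 (pg_adj (by decide)) (pg_adj (by decide)) (pg_adj (by decide))
        (pg_nadj (by decide)) (pg_nadj (by decide)) (hs.h6 _ _ hc)

end Cross
lemma completes_adj {V : Type u} {G : SimpleGraph V} {S : Set (Sym2 V)} {v w : V} :
    (completes G S).Adj v w ↔ G.Adj v w ∨ (s(v, w) ∈ S ∧ v ≠ w) := by
  simp [completes, SimpleGraph.fromEdgeSet_adj]

/-- Transfer a graph embedding along pointwise agreement of adjacency on the image. -/
def embedTrans {V : Type u} {W : Type*} {F : SimpleGraph W} {H1 H2 : SimpleGraph V}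
    (f : F ↪g H1) (h : ∀ a b, H1.Adj (f a) (f b) ↔ H2.Adj (f a) (f b)) : F ↪g H2 where
  toEmbedding := f.toEmbedding
  map_rel_iff' := fun {a b} => (h a b).symm.trans f.map_rel_iff

/-- The key use of minimality: every vertex of `D_t` is reachable from a vertex `b` of the
bag `B_t` by a `G`-path staying inside `D_t`. -/
lemma reach_all {V : Type u} {G : SimpleGraph V} {S : Set (Sym2 V)}
    (hS : IsMinTPCompletion G S) (U : UCD (completes G S)) (t : U.ι) {b : V}
    (hb : b ∈ U.bag t) :
    ∀ d ∈ U.subtreeSet t,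
      Relation.ReflTransGen
        (fun x y => G.Adj x y ∧ x ∈ U.subtreeSet t ∧ y ∈ U.subtreeSet t) b d := by
  set Dt := U.subtreeSet t with hDt
  set Step := fun x y => G.Adj x y ∧ x ∈ Dt ∧ y ∈ Dt with hStep
  by_contra hcon
  push_neg at hcon
  obtain ⟨y0, hy0D, hy0⟩ := hcon
  have hbDt : b ∈ Dt := U.bag_subset_subtree t hb
  set D1 : Set V := {v | v ∈ Dt ∧ Relation.ReflTransGen Step b v} with hD1
  set D2 : Set V := {v | v ∈ Dt ∧ ¬ Relation.ReflTransGen Step b v} with hD2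
  set cross : V → V → Prop := fun x y => (x ∈ D1 ∧ y ∈ D2) ∨ (x ∈ D2 ∧ y ∈ D1) with hcross
  have hb1 : b ∈ D1 := ⟨hbDt, Relation.ReflTransGen.refl⟩
  have hy02 : y0 ∈ D2 := ⟨hy0D, hy0⟩
  have noGcross : ∀ x y, cross x y → ¬ G.Adj x y := by
    rintro x y (⟨hx, hy⟩ | ⟨hx, hy⟩) hadj
    · exact hy.2 (hx.2.tail ⟨hadj, hx.1, hy.1⟩)
    · exact hx.2 (hy.2.tail ⟨hadj.symm, hy.1, hx.1⟩)
  have hadjH : (completes G S).Adj b y0 := by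
    obtain ⟨s0, hs0, hy0bag⟩ := hy0D
    exact (U.adj_of_le hs0 hy0bag hb
      (fun h => hy0 (h ▸ Relation.ReflTransGen.refl))).symm
  have hbS : s(b, y0) ∈ S := by
    rcases completes_adj.mp hadjH with hG | ⟨hmem, _⟩
    · exact absurd (Relation.ReflTransGen.refl.tail ⟨hG, hbDt, hy0D⟩) hy0
    · exact hmem
  set S' : Set (Sym2 V) := {e ∈ S | ¬ ∃ x y, (x ∈ D1 ∧ y ∈ D2) ∧ e = s(x, y)} with hS'
  have hSS' : S' ⊂ S := by
    constructor
    · exact Set.sep_subset _ _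
    · intro hsub
      exact (hsub hbS).2 ⟨b, y0, ⟨hb1, hy02⟩, rfl⟩
  have hH' : ∀ v w, (completes G S').Adj v w ↔ (completes G S).Adj v w ∧ ¬ cross v w := by
    intro v w
    rw [completes_adj, completes_adj]
    constructor
    · rintro (hG | ⟨hmem, hne⟩)
      · exact ⟨Or.inl hG, fun hc => noGcross _ _ hc hG⟩
      · refine ⟨Or.inr ⟨hmem.1, hne⟩, ?_⟩
        rintro (⟨h1, h2⟩ | ⟨h1, h2⟩)
        · exact hmem.2 ⟨v, w, ⟨h1, h2⟩, rfl⟩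
        · exact hmem.2 ⟨w, v, ⟨h2, h1⟩, Sym2.eq_swap.symm⟩
    · rintro ⟨hG | ⟨hmem, hne⟩, hnc⟩
      · exact Or.inl hG
      · refine Or.inr ⟨⟨hmem, ?_⟩, hne⟩
        rintro ⟨x, y, ⟨hx, hy⟩, he⟩
        rcases Sym2.eq_iff.mp he with ⟨rfl, rfl⟩ | ⟨rfl, rfl⟩
        · exact hnc (Or.inl ⟨hx, hy⟩)
        · exact hnc (Or.inr ⟨hy, hx⟩)
  have hDtQB : ∀ v ∈ Dt, ¬ (v ∈ U.tailSet t ∧ v ∉ U.bag t) := by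
    rintro v hv ⟨h1, h2⟩
    exact h2 (U.mem_bag_of_mem_subtree_tail hv h1)
  have hsetup : CrossSetup (completes G S') Dt {v | v ∈ U.tailSet t ∧ v ∉ U.bag t} cross := by
    constructor
    · exact fun x y hc hadj => ((hH' x y).mp hadj).2 hc
    · intro v hv w hadj
      exact (U.adj_mem_subtree hv ((hH' v w).mp hadj).1).imp id (fun h => h)
    · intro r hr v hv
      refine (hH' r v).mpr ⟨U.tail_sdiff_universal hr.1 hr.2 hv, ?_⟩
      rintro (⟨h, _⟩ | ⟨h, _⟩)
      · exact hDtQB r h.1 hr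
      · exact hDtQB r h.1 hr
    · intro r hr r' hr' hne
      refine (hH' r r').mpr ⟨U.tail_isClique t hr.1 hr'.1 hne, ?_⟩
      rintro (⟨h, _⟩ | ⟨h, _⟩)
      · exact hDtQB r h.1 hr
      · exact hDtQB r h.1 hr
    · rintro u v w hv (⟨hu, hw⟩ | ⟨hu, hw⟩) hnc
      · by_cases hrv : Relation.ReflTransGen Step b v
        · exact Or.inl ⟨⟨hv, hrv⟩, hw⟩
        · exact absurd (Or.inl ⟨hu, ⟨hv, hrv⟩⟩) hnc
      · by_cases hrv : Relation.ReflTransGen Step b v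
        · exact absurd (Or.inr ⟨hu, ⟨hv, hrv⟩⟩) hnc
        · exact Or.inr ⟨⟨hv, hrv⟩, hw⟩
    · rintro x y (⟨a, c⟩ | ⟨a, c⟩)
      · exact Or.inr ⟨c, a⟩
      · exact Or.inl ⟨c, a⟩
    · rintro x y (⟨a, c⟩ | ⟨a, c⟩)
      · exact ⟨a.1, c.1⟩
      · exact ⟨a.1, c.1⟩
    · rintro x (⟨a, c⟩ | ⟨a, c⟩)
      · exact c.2 a.2
      · exact a.2 c.2
  have hTP' : TriviallyPerfect (completes G S') := by
    constructor
    · refine ⟨fun f => ?_⟩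
      by_cases hex : ∃ i j, cross (f i) (f j)
      · obtain ⟨i, j, hc⟩ := hex
        exact hsetup.noC4 f hc
      · push_neg at hex
        exact hS.2.1.1.false (embedTrans f (fun a b =>
          ⟨fun h => ((hH' _ _).mp h).1, fun h => (hH' _ _).mpr ⟨h, hex a b⟩⟩))
    · refine ⟨fun f => ?_⟩
      by_cases hex : ∃ i j, cross (f i) (f j)
      · obtain ⟨i, j, hc⟩ := hex
        exact hsetup.noP4 f hc
      · push_neg at hex
        exact hS.2.1.2.false (embedTrans f (fun a b =>
          ⟨fun h => ((hH' _ _).mp h).1, fun h => (hH' _ _).mpr ⟨h, hex a b⟩⟩))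
  exact hS.2.2 S' hSS' hTP'
/-- Structure of a non-leaf, non-root block `(B, D)` with tail `Q` of the universal clique
decomposition of a minimal trivially perfect completion `H = G + S` with `|S| ≤ k`:
(i) `Q` is the intersection of two vital potential maximal cliques; (ii) `B = Q \ Ω₃` for a
vital potential maximal clique `Ω₃`; (iii) `D` is the connected component of `G - (Q \ B)`
containing `B`. -/
theorem minTPCompletion_internal_block_structure {V : Type u} [Fintype V]
    (G : SimpleGraph V) (hG : G.Connected) (k : ℕ)
    (S : Set (Sym2 V)) (hS : IsMinTPCompletion G S) (hcard : S.ncard ≤ k)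
    (U : UCD (completes G S)) (t : U.ι) (hleaf : ¬ U.IsLeaf t) (hroot : t ≠ ⊤) :
    (∃ Ω₁ Ω₂ : Set V, VitalPMC G k Ω₁ ∧ VitalPMC G k Ω₂ ∧ U.tailSet t = Ω₁ ∩ Ω₂) ∧
    (∃ Ω₃ : Set V, VitalPMC G k Ω₃ ∧ U.bag t = U.tailSet t \ Ω₃) ∧
    (∀ b (hb : b ∈ U.bag t) (hb' : b ∈ (U.tailSet t \ U.bag t)ᶜ),
      U.subtreeSet t = Subtype.val ''
        ((G.induce ((U.tailSet t \ U.bag t)ᶜ)).connectedComponentMk ⟨b, hb'⟩).supp) := by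
  refine ⟨?_, ?_, ?_⟩
  · -- Part (i)
    obtain ⟨m1, m2, hm1, hm2, h12, h21, hmax1, _⟩ := U.two_children hleaf
    obtain ⟨ℓ1, hℓ1, hleaf1⟩ := U.exists_leaf_le m1
    obtain ⟨ℓ2, hℓ2, hleaf2⟩ := U.exists_leaf_le m2
    refine ⟨U.tailSet ℓ1, U.tailSet ℓ2, ⟨S, hS, hcard, U.leaf_tail_maximal hleaf1⟩,
      ⟨S, hS, hcard, U.leaf_tail_maximal hleaf2⟩, ?_⟩
    ext v
    constructor
    · rintro ⟨s, hts, hv⟩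
      exact ⟨⟨s, (hℓ1.trans hm1.le).trans hts, hv⟩, ⟨s, (hℓ2.trans hm2.le).trans hts, hv⟩⟩
    · rintro ⟨⟨s1, h1, hv1⟩, ⟨s2, h2, hv2⟩⟩
      obtain rfl : s1 = s2 := U.eq_of_mem_bag hv1 hv2
      rcases U.up_chain ℓ1 s1 m1 h1 hℓ1 with hsm | hms
      · rcases U.up_chain ℓ2 m1 m2 (h2.trans hsm) hℓ2 with h | h
        · exact absurd h h12
        · exact absurd h h21
      · rcases U.up_chain ℓ2 s1 m2 h2 hℓ2 with hsm2 | hms2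
        · exact absurd (hms.trans hsm2) h12
        · rcases U.up_chain m1 s1 t hms hm1.le with h | h
          · rcases eq_or_lt_of_le h with rfl | hlt
            · exact ⟨s1, le_rfl, hv1⟩
            · rw [hmax1 s1 hms hlt] at hms2
              exact absurd hms2 h21
          · exact ⟨s1, h, hv1⟩
  · -- Part (ii)
    obtain ⟨p, htp, hpmin⟩ := U.exists_parent hroot
    have htmax : ∀ s, t ≤ s → s < p → s = t := by
      intro s hts hsp
      rcases eq_or_lt_of_le hts with h | h
      · exact h.symm
      · exact absurd ((hpmin s h).trans_lt hsp) (lt_irrefl p)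
    have h1 : ∃ s, s < p ∧ ¬ s ≤ t := by
      by_contra h
      push_neg at h
      exact U.no_top_child htp h
    obtain ⟨s', hs'p, hs't⟩ := h1
    obtain ⟨m', hs'm', hm'p, _⟩ := U.exists_max_child hs'p
    have hm't : ¬ m' ≤ t := fun h => hs't (hs'm'.trans h)
    have htm' : ¬ t ≤ m' := fun h => hs't (hs'm'.trans (le_of_eq (htmax m' h hm'p)))
    obtain ⟨ℓ', hℓ', hleaf'⟩ := U.exists_leaf_le m'
    refine ⟨U.tailSet ℓ', ⟨S, hS, hcard, U.leaf_tail_maximal hleaf'⟩, ?_⟩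
    ext v
    constructor
    · intro hv
      refine ⟨⟨t, le_rfl, hv⟩, ?_⟩
      rintro ⟨s, hs, hv'⟩
      obtain rfl : t = s := U.eq_of_mem_bag hv hv'
      rcases U.up_chain ℓ' t m' hs hℓ' with h | h
      · exact htm' h
      · exact hm't h
    · rintro ⟨⟨s, hts, hv⟩, hnot⟩
      rcases eq_or_lt_of_le hts with rfl | hlt
      · exact hv
      · exact absurd ⟨s, hℓ'.trans (hm'p.le.trans (hpmin s hlt)), hv⟩ hnot
  · -- Part (iii)
    intro b hb hb'
    have hbDt : b ∈ U.subtreeSet t := U.bag_subset_subtree t hb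
    have hDtQB : ∀ v ∈ U.subtreeSet t, v ∈ (U.tailSet t \ U.bag t)ᶜ := by
      intro v hv hq
      exact hq.2 (U.mem_bag_of_mem_subtree_tail hv hq.1)
    have hforward : ∀ (y : ((U.tailSet t \ U.bag t)ᶜ : Set V)),
        (G.induce ((U.tailSet t \ U.bag t)ᶜ)).Reachable ⟨b, hb'⟩ y → (y : V) ∈ U.subtreeSet t := by
      have key : ∀ (x y : ((U.tailSet t \ U.bag t)ᶜ : Set V))
          (w : (G.induce ((U.tailSet t \ U.bag t)ᶜ)).Walk x y),
          (x : V) ∈ U.subtreeSet t → (y : V) ∈ U.subtreeSet t := by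
        intro x y w
        induction w with
        | nil => exact id
        | @cons x' y' z' h p ih =>
          intro hx
          apply ih
          have hGadj : G.Adj (x' : V) (y' : V) := h
          have hHadj : (completes G S).Adj (x' : V) (y' : V) := completes_adj.mpr (Or.inl hGadj)
          rcases U.adj_mem_subtree hx hHadj with hD | hQ
          · exact hD
          · exact absurd ⟨hQ.1, hQ.2⟩ y'.2
      intro y hy
      exact hy.elim fun w => key _ _ w hbDt
    have hback : ∀ v, Relation.ReflTransGen
        (fun x y => G.Adj x y ∧ x ∈ U.subtreeSet t ∧ y ∈ U.subtreeSet t) b v →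
        ∃ (hv : v ∈ (U.tailSet t \ U.bag t)ᶜ),
          (G.induce ((U.tailSet t \ U.bag t)ᶜ)).Reachable ⟨b, hb'⟩ ⟨v, hv⟩ := by
      intro v h
      induction h with
      | refl => exact ⟨hb', SimpleGraph.Reachable.refl _⟩
      | @tail c d hcd hstep ih =>
        obtain ⟨hcmem, hreach⟩ := ih
        have hdmem : d ∈ (U.tailSet t \ U.bag t)ᶜ := hDtQB d hstep.2.2
        refine ⟨hdmem, hreach.trans (SimpleGraph.Adj.reachable ?_)⟩
        exact hstep.1
    have hreach := reach_all hS U t hb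
    ext x
    simp only [Set.mem_image, SimpleGraph.ConnectedComponent.mem_supp_iff]
    constructor
    · intro hx
      obtain ⟨hmem, hr⟩ := hback x (hreach x hx)
      exact ⟨⟨x, hmem⟩, SimpleGraph.ConnectedComponent.sound hr.symm, rfl⟩
    · rintro ⟨y, hy, rfl⟩
      exact hforward y (SimpleGraph.ConnectedComponent.eq.mp hy).symm
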